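/- Let X = (x_0,…,x_{d+1}) be a (d+1)-simplex with distinct vertices in a real Hilbert space. Then p_d sin_{x_0}(X) ≤ (2·(d+1)/scale_{x_0}(X)) · h(X)/diam(X), where h(X) is the minimal height of the simplex and scale_{x_0}(X) is the ratio of the minimal to maximal edge length at x_0. -/

import Mathlib

set_option linter.unusedSectionVars false

open Finset Metric Submodule Matrix

section Aux

variable {H : Type*} [NormedAddCommGroup H] [InnerProductSpace ℝ H]

/-- Gram matrix. -/
noncomputable def gmat {n : ℕ} (v : Fin n → H) : Matrix (Fin n) (Fin n) ℝ :=
  Matrix.of fun i j => (inner ℝ (v i) (v j) : ℝ)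

lemma my_le_infDist {s : Set H} (hs : s.Nonempty) {x : H} {b : ℝ}
    (h : ∀ y ∈ s, b ≤ dist x y) : b ≤ Metric.infDist x s := by
  by_contra hlt
  obtain ⟨y, hy, hdy⟩ := (Metric.infDist_lt_iff hs).1 (not_le.1 hlt)
  exact absurd (h y hy) (not_le.2 hdy)

lemma exists_proj (V : Submodule ℝ H) [FiniteDimensional ℝ V] (u : H) :
    ∃ p ∈ V, (∀ w ∈ V, ‖u - p‖ ≤ ‖u - w‖) ∧ ∀ w ∈ V, (inner ℝ (u - p) w : ℝ) = 0 := by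
  haveI : CompleteSpace V := FiniteDimensional.complete ℝ V
  refine ⟨orthogonalProjection V u, Submodule.coe_mem _, ?_, ?_⟩
  · intro w hw
    have horth : ∀ z ∈ V, (inner ℝ (u - (orthogonalProjection V u : H)) z : ℝ) = 0 := by
      intro z hz
      exact (Submodule.mem_orthogonal' V _).1 (Submodule.sub_starProjection_mem_orthogonal (K := V) u) z hz
    have hpy : ((orthogonalProjection V u : H) - w) ∈ V :=
      Submodule.sub_mem V (Submodule.coe_mem _) hw
    have hde : u - w = (u - (orthogonalProjection V u : H)) + ((orthogonalProjection V u : H) - w) := by abel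
    have hsq : ‖u - w‖ ^ 2 = ‖u - (orthogonalProjection V u : H)‖ ^ 2
        + ‖(orthogonalProjection V u : H) - w‖ ^ 2 := by
      rw [hde, norm_add_sq_real, horth _ hpy]; ring
    have h2 : ‖u - (orthogonalProjection V u : H)‖ ^ 2 ≤ ‖u - w‖ ^ 2 := by
      rw [hsq]; nlinarith [sq_nonneg ‖(orthogonalProjection V u : H) - w‖]
    calc ‖u - (orthogonalProjection V u : H)‖
        = Real.sqrt (‖u - (orthogonalProjection V u : H)‖ ^ 2) := (Real.sqrt_sq (norm_nonneg _)).symm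
      _ ≤ Real.sqrt (‖u - w‖ ^ 2) := Real.sqrt_le_sqrt h2
      _ = ‖u - w‖ := Real.sqrt_sq (norm_nonneg _)
  · intro w hw
    exact (Submodule.mem_orthogonal' V _).1 (Submodule.sub_starProjection_mem_orthogonal (K := V) u) w hw

lemma gmat_conj {n : ℕ} (v : Fin n → H) (B : Matrix (Fin n) (Fin n) ℝ) :
    gmat (fun i => ∑ j, B i j • v j) = B * gmat v * Bᵀ := by
  ext i j
  simp only [gmat, Matrix.of_apply, Matrix.mul_apply, Matrix.transpose_apply,
    sum_inner, inner_sum, real_inner_smul_left, real_inner_smul_right]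
  simp only [Finset.sum_mul, Finset.mul_sum]
  apply Finset.sum_congr rfl; intro k _
  apply Finset.sum_congr rfl; intro l _
  rw [real_inner_comm]
  ring

lemma det_gram_succ (n : ℕ) (v : Fin (n + 1) → H) :
    (gmat v).det = (gmat (v ∘ Fin.castSucc)).det *
      (Metric.infDist (v (Fin.last n))
        (Submodule.span ℝ (Set.range (v ∘ Fin.castSucc)) : Set H)) ^ 2 := by
  classical
  set K : Submodule ℝ H := Submodule.span ℝ (Set.range (v ∘ Fin.castSucc)) with hK
  haveI : FiniteDimensional ℝ K := FiniteDimensional.span_of_finite ℝ (Set.finite_range _)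
  obtain ⟨p, hpK, hmin, horth⟩ := exists_proj K (v (Fin.last n))
  -- infDist equals ‖v last - p‖
  have hdist : Metric.infDist (v (Fin.last n)) (K : Set H) = ‖v (Fin.last n) - p‖ := by
    refine le_antisymm ?_ ?_
    · rw [← dist_eq_norm]
      exact Metric.infDist_le_dist_of_mem hpK
    · refine my_le_infDist ⟨p, hpK⟩ fun y hy => ?_
      rw [dist_eq_norm]
      exact hmin y hy
  obtain ⟨c, hc⟩ := (mem_span_range_iff_exists_fun ℝ).1 hpK
  -- the unimodular row-operation matrix
  set cc : Fin (n + 1) → ℝ := Fin.snoc c 0 with hcc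
  set B : Matrix (Fin (n + 1)) (Fin (n + 1)) ℝ :=
    Matrix.of (fun i j => if i = Fin.last n then (if j = Fin.last n then 1 else - cc j)
      else (if i = j then 1 else 0)) with hB
  set w : Fin (n + 1) → H := fun i => ∑ j, B i j • v j with hw
  have hw_cast : ∀ k : Fin n, w k.castSucc = v k.castSucc := by
    intro k
    have hne : k.castSucc ≠ Fin.last n := (Fin.castSucc_lt_last k).ne
    simp only [hw, hB, Matrix.of_apply, hne, if_false, ite_smul, one_smul, zero_smul]
    simp
  have hw_last : w (Fin.last n) = v (Fin.last n) - p := by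
    simp only [hw, hB, Matrix.of_apply, if_pos rfl]
    rw [Fin.sum_univ_castSucc]
    simp only [(Fin.castSucc_lt_last _).ne, if_false, if_pos rfl, one_smul, neg_smul, hcc,
      Fin.snoc_castSucc]
    rw [← hc]
    simp [sub_eq_neg_add, Finset.sum_neg_distrib]
  have hdetB : B.det = 1 := by
    have htri : B.BlockTriangular OrderDual.toDual := by
      intro i j hij
      have h1 : i < j := hij
      have h2 : i ≠ Fin.last n := by
        intro h; subst h; exact absurd h1 (Fin.le_last j).not_gt
      simp [hB, h2, h1.ne]
    rw [Matrix.det_of_lowerTriangular B htri]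
    have : ∀ i, B i i = 1 := by
      intro i
      by_cases h : i = Fin.last n <;> simp [hB, h]
    simp [this]
  have hdet : (gmat w).det = (gmat v).det := by
    rw [hw, gmat_conj, Matrix.det_mul, Matrix.det_mul, Matrix.det_transpose, hdetB]
    ring
  -- q orthogonal to all other rows
  set q : H := v (Fin.last n) - p with hq
  have hqV : ∀ y ∈ K, (inner ℝ q y : ℝ) = 0 := horth
  have hlastrow : ∀ j : Fin n, gmat w (Fin.last n) j.castSucc = 0 := by
    intro j
    have : v j.castSucc ∈ K := Submodule.subset_span ⟨j, rfl⟩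
    simp only [gmat, Matrix.of_apply, hw_cast, hw_last]
    exact hqV _ this
  -- expand determinant along the last row
  have hexp : (gmat w).det = ‖q‖ ^ 2 * (gmat (v ∘ Fin.castSucc)).det := by
    rw [Matrix.det_succ_row (gmat w) (Fin.last n)]
    rw [Fin.sum_univ_castSucc]
    have hz : ∀ j : Fin n,
        (-1 : ℝ) ^ ((Fin.last n : ℕ) + (j.castSucc : ℕ)) * gmat w (Fin.last n) j.castSucc *
          ((gmat w).submatrix (Fin.last n).succAbove j.castSucc.succAbove).det = 0 := by
      intro j; rw [hlastrow j]; ring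
    rw [Finset.sum_congr rfl fun j _ => hz j]
    simp only [Finset.sum_const_zero, zero_add]
    have hqq : gmat w (Fin.last n) (Fin.last n) = ‖q‖ ^ 2 := by
      simp only [gmat, Matrix.of_apply, hw_last, ← hq]
      exact real_inner_self_eq_norm_sq q
    have hsub : (gmat w).submatrix (Fin.last n).succAbove (Fin.last n).succAbove
        = gmat (v ∘ Fin.castSucc) := by
      ext i j
      simp [gmat, Matrix.submatrix_apply, Fin.succAbove_last, hw_cast]
    rw [hqq, hsub]
    have : (-1 : ℝ) ^ ((Fin.last n : ℕ) + (Fin.last n : ℕ)) = 1 := by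
      rw [Fin.val_last]
      exact Even.neg_one_pow ⟨n, rfl⟩
    rw [this]
    ring
  rw [← hdet, hexp, hdist]
  ring

lemma det_gram_nonneg : ∀ (n : ℕ) (v : Fin n → H), 0 ≤ (gmat v).det := by
  intro n
  induction n with
  | zero => intro v; simp [Matrix.det_fin_zero]
  | succ n ih =>
    intro v
    rw [det_gram_succ]
    exact mul_nonneg (ih _) (sq_nonneg _)

lemma det_gram_le_prod : ∀ (n : ℕ) (v : Fin n → H), (gmat v).det ≤ ∏ i, ‖v i‖ ^ 2 := by
  intro n
  induction n with
  | zero => intro v; simp [Matrix.det_fin_zero]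
  | succ n ih =>
    intro v
    rw [det_gram_succ, Fin.prod_univ_castSucc]
    have h1 : Metric.infDist (v (Fin.last n))
        (Submodule.span ℝ (Set.range (v ∘ Fin.castSucc)) : Set H) ≤ ‖v (Fin.last n)‖ := by
      have h0 : (0 : H) ∈ (Submodule.span ℝ (Set.range (v ∘ Fin.castSucc)) : Set H) :=
        Submodule.zero_mem _
      calc Metric.infDist (v (Fin.last n)) _ ≤ dist (v (Fin.last n)) 0 :=
            Metric.infDist_le_dist_of_mem h0
        _ = ‖v (Fin.last n)‖ := by rw [dist_zero_right]
    exact mul_le_mul (ih _) (pow_le_pow_left₀ Metric.infDist_nonneg h1 2) (sq_nonneg _)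
      (Finset.prod_nonneg fun _ _ => sq_nonneg _)

lemma sqrt_det_le (n : ℕ) (v : Fin (n + 1) → H) :
    Real.sqrt (gmat v).det ≤ (∏ j : Fin n, ‖v j.castSucc‖) *
      Metric.infDist (v (Fin.last n))
        (Submodule.span ℝ (Set.range (v ∘ Fin.castSucc)) : Set H) := by
  rw [det_gram_succ, Real.sqrt_mul (det_gram_nonneg _ _), Real.sqrt_sq Metric.infDist_nonneg]
  refine mul_le_mul_of_nonneg_right ?_ Metric.infDist_nonneg
  calc Real.sqrt (gmat (v ∘ Fin.castSucc)).det
      ≤ Real.sqrt (∏ j : Fin n, ‖(v ∘ Fin.castSucc) j‖ ^ 2) :=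
        Real.sqrt_le_sqrt (det_gram_le_prod _ _)
    _ = ∏ j : Fin n, ‖v j.castSucc‖ := by
        rw [Finset.prod_pow]
        exact Real.sqrt_sq (Finset.prod_nonneg fun _ _ => norm_nonneg _)

lemma sqrt_det_le' (n : ℕ) (v : Fin (n + 1) → H) (i : Fin (n + 1)) :
    Real.sqrt (gmat v).det * ‖v i‖ ≤ (∏ j, ‖v j‖) *
      Metric.infDist (v i) (Submodule.span ℝ (v '' {j | j ≠ i}) : Set H) := by
  classical
  set e := Equiv.swap i (Fin.last n) with he
  have hgram : gmat (v ∘ e) = (gmat v).submatrix e e := rfl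
  have hdet : (gmat (v ∘ e)).det = (gmat v).det := by
    rw [hgram, Matrix.det_submatrix_equiv_self]
  have hlast : (v ∘ e) (Fin.last n) = v i := by
    simp [he, Equiv.swap_apply_right]
  have hrange : Set.range ((v ∘ e) ∘ Fin.castSucc) = v '' {j | j ≠ i} := by
    have h1 : Set.range (e ∘ Fin.castSucc) = {j | j ≠ i} := by
      ext j
      constructor
      · rintro ⟨k, rfl⟩
        simp only [Function.comp_apply, Set.mem_setOf_eq]
        intro hcontra
        have h2 : k.castSucc = e i := by
          have h3 := congrArg e hcontra
          rwa [he, Equiv.swap_apply_self] at h3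
        rw [he, Equiv.swap_apply_left] at h2
        exact (Fin.castSucc_lt_last k).ne h2
      · intro hj
        have hej : e j ≠ Fin.last n := by
          intro hcontra
          apply hj
          have := congrArg e hcontra
          rwa [Equiv.swap_apply_self, Equiv.swap_apply_right] at this
        obtain ⟨k, hk⟩ := Fin.exists_castSucc_eq.2 hej
        exact ⟨k, by simp only [Function.comp_apply, hk, he, Equiv.swap_apply_self]⟩
    calc Set.range ((v ∘ e) ∘ Fin.castSucc) = Set.range (v ∘ (e ∘ Fin.castSucc)) := rfl
      _ = v '' Set.range (e ∘ Fin.castSucc) := by rw [Set.range_comp]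
      _ = v '' {j | j ≠ i} := by rw [h1]
  have hE := sqrt_det_le n (v ∘ e)
  rw [hdet, hlast, hrange] at hE
  have hmul := mul_le_mul_of_nonneg_right hE (norm_nonneg (v i))
  calc Real.sqrt (gmat v).det * ‖v i‖ ≤
      (∏ j : Fin n, ‖(v ∘ e) j.castSucc‖) *
        Metric.infDist (v i) (Submodule.span ℝ (v '' {j | j ≠ i}) : Set H) * ‖v i‖ := hmul
    _ = (∏ j, ‖v j‖) *
        Metric.infDist (v i) (Submodule.span ℝ (v '' {j | j ≠ i}) : Set H) := by
      rw [mul_right_comm]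
      congr 1
      have : (∏ j : Fin n, ‖(v ∘ e) j.castSucc‖) * ‖v i‖ = ∏ j, ‖(v ∘ e) j‖ := by
        rw [← hlast]
        exact (Fin.prod_univ_castSucc fun j => ‖(v ∘ e) j‖).symm
      rw [this]
      exact Equiv.prod_comp e fun j => ‖v j‖

/-- distance to linear span at the base point is at most the height. -/
lemma infDist_span_le_height (d : ℕ) (X : Fin (d + 2) → H) (i : Fin (d + 1)) :
    Metric.infDist (X i.succ - X 0)
        (Submodule.span ℝ ((fun k : Fin (d + 1) => X k.succ - X 0) '' {j | j ≠ i}) : Set H)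
      ≤ Metric.infDist (X i.succ) (affineSpan ℝ (X '' {j | j ≠ i.succ}) : Set H) := by
  set K : Submodule ℝ H :=
    Submodule.span ℝ ((fun k : Fin (d + 1) => X k.succ - X 0) '' {j | j ≠ i}) with hK
  have hle : affineSpan ℝ (X '' {j | j ≠ i.succ}) ≤ AffineSubspace.mk' (X 0) K := by
    rw [affineSpan_le]
    rintro _ ⟨j, hj, rfl⟩
    rw [SetLike.mem_coe, AffineSubspace.mem_mk']
    rcases Fin.eq_zero_or_eq_succ j with rfl | ⟨k, rfl⟩
    · simp only [vsub_eq_sub, sub_self]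
      exact Submodule.zero_mem _
    · have hki : k ≠ i := fun h => hj (by rw [h])
      exact Submodule.subset_span ⟨k, hki, rfl⟩
  have hne : (affineSpan ℝ (X '' {j | j ≠ i.succ}) : Set H).Nonempty := by
    refine ⟨X 0, subset_affineSpan ℝ _ ⟨0, ?_, rfl⟩⟩
    exact (Fin.succ_ne_zero i).symm
  refine my_le_infDist hne fun y hy => ?_
  have hyK : y - X 0 ∈ K := by
    have h5 := hle hy
    rw [AffineSubspace.mem_mk', vsub_eq_sub] at h5
    exact h5
  calc Metric.infDist (X i.succ - X 0) (K : Set H) ≤ dist (X i.succ - X 0) (y - X 0) :=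
        Metric.infDist_le_dist_of_mem hyK
    _ = dist (X i.succ) y := by rw [dist_eq_norm, dist_eq_norm, sub_sub_sub_cancel_right]

/-- there is a vertex (other than `x₀`) whose height is at most `(d+1)` times
the height of `x₀`. -/
lemma exists_height_le (d : ℕ) (X : Fin (d + 2) → H) :
    ∃ i : Fin (d + 1),
      Metric.infDist (X i.succ) (affineSpan ℝ (X '' {j | j ≠ i.succ}) : Set H) ≤
        ((d : ℝ) + 1) *
          Metric.infDist (X 0) (affineSpan ℝ (X '' {j | j ≠ 0}) : Set H) := by
  classical
  set P : Fin (d + 1) → H := fun k => X k.succ with hP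
  have hset : X '' {j | j ≠ 0} = Set.range P := by
    ext w
    constructor
    · rintro ⟨j, hj, rfl⟩
      obtain ⟨k, rfl⟩ := Fin.exists_succ_eq_of_ne_zero hj
      exact ⟨k, rfl⟩
    · rintro ⟨k, rfl⟩
      exact ⟨k.succ, Fin.succ_ne_zero k, rfl⟩
  set A := affineSpan ℝ (Set.range P) with hA
  have hPA : ∀ k, P k ∈ A := fun k => subset_affineSpan ℝ _ ⟨k, rfl⟩
  set V := vectorSpan ℝ (Set.range P) with hV
  obtain ⟨p, hpV, hmin, -⟩ := exists_proj V (X 0 - P 0)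
  set y := P 0 + p with hy0
  have hyA : y ∈ A := by
    have hpd : p ∈ A.direction := by rw [hA, direction_affineSpan]; exact hpV
    have h6 := AffineSubspace.vadd_mem_of_mem_direction hpd (hPA 0)
    simpa [hy0, vadd_eq_add, add_comm] using h6
  have hgap : ‖X 0 - y‖ = ‖X 0 - P 0 - p‖ := by rw [hy0]; congr 1; abel
  have hinf : Metric.infDist (X 0) (A : Set H) = ‖X 0 - y‖ := by
    refine le_antisymm (by rw [← dist_eq_norm]; exact Metric.infDist_le_dist_of_mem hyA) ?_
    refine my_le_infDist ⟨y, hyA⟩ fun a ha => ?_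
    rw [dist_eq_norm, hgap]
    have haV : a - P 0 ∈ V := by
      have h7 : a -ᵥ P 0 ∈ A.direction :=
        AffineSubspace.vsub_mem_direction ha (hPA 0)
      rwa [hA, direction_affineSpan, vsub_eq_sub] at h7
    have h8 : X 0 - a = X 0 - P 0 - (a - P 0) := by abel
    rw [h8]
    exact hmin _ haV
  obtain ⟨t, ht1, hty⟩ := eq_affineCombination_of_mem_affineSpan_of_fintype hyA
  have hylin : y = ∑ k, t k • P k := by
    rw [hty]
    exact Finset.univ.affineCombination_eq_linear_combination P t ht1
  have hsumle : ∑ _k : Fin (d + 1), 1 / ((d : ℝ) + 1) ≤ ∑ k, t k := by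
    rw [ht1, Finset.sum_const, Finset.card_univ, Fintype.card_fin, nsmul_eq_mul]
    push_cast
    rw [mul_one_div, div_self (by positivity)]
  obtain ⟨i, -, hti⟩ := Finset.exists_le_of_sum_le Finset.univ_nonempty hsumle
  have htipos : 0 < t i := lt_of_lt_of_le (by positivity) hti
  set z := (∑ k ∈ Finset.univ.erase i, (-(t k) / t i) • (P k - X 0)) + X 0 with hz
  have hX0mem : X 0 ∈ affineSpan ℝ (X '' {j | j ≠ i.succ}) :=
    subset_affineSpan ℝ _ ⟨0, (Fin.succ_ne_zero i).symm, rfl⟩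
  have hzA : z ∈ affineSpan ℝ (X '' {j | j ≠ i.succ}) := by
    have hmem : ∀ k ∈ Finset.univ.erase i,
        (P k - X 0) ∈ (affineSpan ℝ (X '' {j | j ≠ i.succ})).direction := by
      intro k hk
      have hki : k ≠ i := (Finset.mem_erase.1 hk).1
      rw [direction_affineSpan, ← vsub_eq_sub]
      exact vsub_mem_vectorSpan ℝ ⟨k.succ, fun h => hki (Fin.succ_injective _ h), rfl⟩
        ⟨0, (Fin.succ_ne_zero i).symm, rfl⟩
    have hv : (∑ k ∈ Finset.univ.erase i, (-(t k) / t i) • (P k - X 0)) ∈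
        (affineSpan ℝ (X '' {j | j ≠ i.succ})).direction :=
      Submodule.sum_mem _ fun k hk => Submodule.smul_mem _ _ (hmem k hk)
    have h9 := AffineSubspace.vadd_mem_of_mem_direction hv hX0mem
    simpa [vadd_eq_add, hz] using h9
  have hkey : X i.succ - z = (t i)⁻¹ • (y - X 0) := by
    have h1 : ∑ k ∈ Finset.univ.erase i, t k • P k = y - t i • P i := by
      have := Finset.add_sum_erase Finset.univ (fun k => t k • P k) (Finset.mem_univ i)
      rw [hylin]
      linear_combination (norm := abel) this
    have h2 : (∑ k ∈ Finset.univ.erase i, t k) = 1 - t i := by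
      have := Finset.add_sum_erase Finset.univ t (Finset.mem_univ i)
      rw [← ht1]; linarith
    have h3 : ∀ k, (-(t k) / t i) • (P k - X 0) = (t i)⁻¹ • (t k • X 0 - t k • P k) := by
      intro k
      match_scalars <;> field_simp
    rw [hz, Finset.sum_congr rfl fun k _ => h3 k, ← Finset.smul_sum,
      Finset.sum_sub_distrib, ← Finset.sum_smul, h2, h1]
    have hPi : P i = X i.succ := rfl
    rw [← hPi]
    have hti0 : t i ≠ 0 := ne_of_gt htipos
    match_scalars <;> field_simp <;> ring
  refine ⟨i, ?_⟩
  have hd : Metric.infDist (X i.succ) (affineSpan ℝ (X '' {j | j ≠ i.succ}) : Set H) ≤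
      ‖X i.succ - z‖ := by
    rw [← dist_eq_norm]
    exact Metric.infDist_le_dist_of_mem hzA
  rw [hkey] at hd
  have hnorm : ‖(t i)⁻¹ • (y - X 0)‖ = (t i)⁻¹ * ‖X 0 - y‖ := by
    rw [norm_smul, Real.norm_eq_abs, abs_of_pos (inv_pos.2 htipos), norm_sub_rev]
  have hinv : (t i)⁻¹ ≤ (d : ℝ) + 1 := by
    have h10 : (0 : ℝ) < 1 / ((d : ℝ) + 1) := by positivity
    calc (t i)⁻¹ ≤ (1 / ((d : ℝ) + 1))⁻¹ := by
          apply inv_anti₀ h10 hti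
      _ = (d : ℝ) + 1 := by rw [one_div, inv_inv]
  rw [hset, ← hA, hinf]
  calc Metric.infDist (X i.succ) (affineSpan ℝ (X '' {j | j ≠ i.succ}) : Set H)
      ≤ (t i)⁻¹ * ‖X 0 - y‖ := by rw [← hnorm]; exact hd
    _ ≤ ((d : ℝ) + 1) * ‖X 0 - y‖ :=
        mul_le_mul_of_nonneg_right hinv (norm_nonneg _)

end Aux

/-- The `n`-content: square root of the Gram determinant of the vectors `v`. -/
noncomputable def gramContent {H : Type*} [NormedAddCommGroup H] [InnerProductSpace ℝ H]
    {n : ℕ} (v : Fin n → H) : ℝ :=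
  Real.sqrt (Matrix.det (Matrix.of fun i j => (inner ℝ (v i) (v j) : ℝ)))

/-- Bound on the polar sine by the minimal height:
`p_d sin_{x_0}(X) ≤ (2·(d+1)/scale_{x_0}(X)) · h(X)/diam(X)`. -/
theorem stmt_6 {H : Type*} [NormedAddCommGroup H] [InnerProductSpace ℝ H] [CompleteSpace H]
    (d : ℕ) (X : Fin (d + 2) → H) (hX : Function.Injective X) :
    gramContent (fun i : Fin (d + 1) => X i.succ - X 0) /
        ∏ i : Fin (d + 1), ‖X i.succ - X 0‖ ≤
      2 * (d + 1) /
          ((Finset.univ.inf' Finset.univ_nonempty fun i : Fin (d + 1) => ‖X i.succ - X 0‖) /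
            (Finset.univ.sup' Finset.univ_nonempty fun i : Fin (d + 1) => ‖X i.succ - X 0‖)) *
        ((Finset.univ.inf' Finset.univ_nonempty fun i : Fin (d + 2) =>
            Metric.infDist (X i) (affineSpan ℝ (X '' {j | j ≠ i}) : Set H)) /
          Finset.univ.sup' Finset.univ_nonempty
            (fun p : Fin (d + 2) × Fin (d + 2) => dist (X p.1) (X p.2))) := by
  classical
  set v : Fin (d + 1) → H := fun i => X i.succ - X 0 with hv
  set m : ℝ := Finset.univ.inf' Finset.univ_nonempty
    (fun i : Fin (d + 1) => ‖X i.succ - X 0‖) with hm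
  set M : ℝ := Finset.univ.sup' Finset.univ_nonempty
    (fun i : Fin (d + 1) => ‖X i.succ - X 0‖) with hM
  set hgt : ℝ := Finset.univ.inf' Finset.univ_nonempty
    (fun i : Fin (d + 2) =>
      Metric.infDist (X i) (affineSpan ℝ (X '' {j | j ≠ i}) : Set H)) with hhgt
  set D : ℝ := Finset.univ.sup' Finset.univ_nonempty
    (fun p : Fin (d + 2) × Fin (d + 2) => dist (X p.1) (X p.2)) with hD
  have hnorm_pos : ∀ i : Fin (d + 1), 0 < ‖X i.succ - X 0‖ := fun i => by
    rw [norm_pos_iff, sub_ne_zero]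
    exact hX.ne (Fin.succ_ne_zero i)
  have hm_pos : 0 < m := by
    rw [hm]
    exact (Finset.lt_inf'_iff _).2 fun i _ => hnorm_pos i
  have hmM : m ≤ M := by
    rw [hm, hM]
    exact le_trans (Finset.inf'_le _ (Finset.mem_univ (0 : Fin (d + 1))))
      (Finset.le_sup' (fun i : Fin (d + 1) => ‖X i.succ - X 0‖)
        (Finset.mem_univ (0 : Fin (d + 1))))
  have hM_pos : 0 < M := lt_of_lt_of_le hm_pos hmM
  have hdistM : ∀ j : Fin (d + 2), dist (X j) (X 0) ≤ M := by
    intro j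
    rcases Fin.eq_zero_or_eq_succ j with rfl | ⟨k, rfl⟩
    · simp [hM_pos.le]
    · rw [dist_eq_norm, hM]
      exact Finset.le_sup' (fun i : Fin (d + 1) => ‖X i.succ - X 0‖) (Finset.mem_univ k)
  have hD_pos : 0 < D := by
    rw [hD, Finset.lt_sup'_iff]
    refine ⟨((0 : Fin (d + 1)).succ, 0), Finset.mem_univ _, ?_⟩
    show (0 : ℝ) < dist (X (0 : Fin (d + 1)).succ) (X 0)
    rw [dist_pos]
    exact hX.ne (Fin.succ_ne_zero 0)
  have hD2M : D ≤ 2 * M := by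
    rw [hD]
    refine Finset.sup'_le _ _ fun p _ => ?_
    have h1 := hdistM p.1
    have h2 := hdistM p.2
    have h3 := dist_triangle (X p.1) (X 0) (X p.2)
    rw [dist_comm (X 0)] at h3
    linarith
  have hh_nonneg : 0 ≤ hgt :=
    Finset.le_inf' _ _ fun j _ => Metric.infDist_nonneg
  have hgt_le : ∀ j : Fin (d + 2),
      hgt ≤ Metric.infDist (X j) (affineSpan ℝ (X '' {i | i ≠ j}) : Set H) := by
    intro j
    rw [hhgt]
    exact Finset.inf'_le _ (Finset.mem_univ j)
  -- choose a vertex among `x₁, …` with small height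
  obtain ⟨i, hi⟩ : ∃ i : Fin (d + 1),
      Metric.infDist (X i.succ) (affineSpan ℝ (X '' {j | j ≠ i.succ}) : Set H) ≤
        ((d : ℝ) + 1) * hgt := by
    obtain ⟨j0, -, hj0⟩ := Finset.exists_mem_eq_inf' (Finset.univ_nonempty)
      (fun i : Fin (d + 2) =>
        Metric.infDist (X i) (affineSpan ℝ (X '' {j | j ≠ i}) : Set H))
    rcases Fin.eq_zero_or_eq_succ j0 with rfl | ⟨k, rfl⟩
    · obtain ⟨i, hi⟩ := exists_height_le d X
      refine ⟨i, hi.trans ?_⟩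
      rw [hhgt, hj0]
    · refine ⟨k, ?_⟩
      have : hgt = Metric.infDist (X k.succ)
          (affineSpan ℝ (X '' {j | j ≠ k.succ}) : Set H) := by rw [hhgt, hj0]
      rw [← this]
      nlinarith [hh_nonneg]
  have key := sqrt_det_le' (H := H) d v i
  have hG := infDist_span_le_height d X i
  have hprod_pos : 0 < ∏ j, ‖v j‖ := Finset.prod_pos fun j _ => hnorm_pos j
  have hgc : gramContent v = Real.sqrt (gmat v).det := rfl
  set dI : ℝ := Metric.infDist (v i) (Submodule.span ℝ (v '' {j | j ≠ i}) : Set H) with hdI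
  have step1 : gramContent v / ∏ j, ‖v j‖ ≤ dI / ‖v i‖ := by
    rw [div_le_div_iff₀ hprod_pos (hnorm_pos i)]
    rw [hgc]
    calc Real.sqrt (gmat v).det * ‖v i‖ ≤ (∏ j, ‖v j‖) * dI := key
      _ = dI * ∏ j, ‖v j‖ := by ring
  have hG' : dI ≤ Metric.infDist (X i.succ)
      (affineSpan ℝ (X '' {j | j ≠ i.succ}) : Set H) := hG
  have step2 : dI / ‖v i‖ ≤
      Metric.infDist (X i.succ) (affineSpan ℝ (X '' {j | j ≠ i.succ}) : Set H) / m :=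
    div_le_div₀ Metric.infDist_nonneg hG' hm_pos
      (by rw [hm]; exact Finset.inf'_le _ (Finset.mem_univ i))
  have step3 : Metric.infDist (X i.succ)
      (affineSpan ℝ (X '' {j | j ≠ i.succ}) : Set H) / m ≤ ((d : ℝ) + 1) * hgt / m :=
    (div_le_div_iff_of_pos_right hm_pos).2 hi
  have step4 : ((d : ℝ) + 1) * hgt / m ≤ 2 * ((d : ℝ) + 1) / (m / M) * (hgt / D) := by
    have hRHS : 2 * ((d : ℝ) + 1) / (m / M) * (hgt / D) =
        ((d : ℝ) + 1) * hgt / m * (2 * M / D) := by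
      field_simp
    rw [hRHS]
    refine le_mul_of_one_le_right ?_ ?_
    · exact div_nonneg (mul_nonneg (by positivity) hh_nonneg) hm_pos.le
    · rw [le_div_iff₀ hD_pos, one_mul]
      exact hD2M
  exact le_trans (le_trans (le_trans step1 step2) step3) step4
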